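/- Let m ≤ n and let {A,B} be an (m,p,n)-GMP with GSVD as in the context, with generalized singular values (αᵢ, βᵢ). Then for every 1 ≤ i ≤ m, max_{Π₃ ∈ 𝕌_n, Π₄ ∈ 𝕌_m} |tr(Π₃ (AᴴA + BᴴB)^{-1/2} Aᴴ Π₄ 𝒮_i)| = α₁ + α₂ + ⋯ + αᵢ. -/

import Mathlib

open Matrix BigOperators
open scoped ComplexOrder
open Finset

private lemma rearr {m : ℕ} (a c : Fin m → ℝ) (i : Fin m)
    (hmono : Antitone a) (ha : ∀ k, 0 ≤ a k)
    (hc0 : ∀ k, 0 ≤ c k) (hc1 : ∀ k, c k ≤ 1)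
    (hsum : ∑ k, c k ≤ (Finset.Iic i).card) :
    ∑ k, a k * c k ≤ ∑ k ∈ Finset.Iic i, a k := by
  classical
  have hsplitc : ∑ k ∈ Iic i, c k + ∑ k ∈ (Iic i)ᶜ, c k = ∑ k, c k :=
    Finset.sum_add_sum_compl _ _
  have hcard : ((Iic i).card : ℝ) = ∑ _k ∈ Iic i, (1:ℝ) := by simp
  have h2 : ∑ k ∈ (Iic i)ᶜ, c k ≤ ∑ k ∈ Iic i, (1 - c k) := by
    rw [Finset.sum_sub_distrib, ← hcard]
    linarith
  have h1 : ∑ k ∈ (Iic i)ᶜ, a k * c k ≤ a i * ∑ k ∈ (Iic i)ᶜ, c k := by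
    rw [Finset.mul_sum]
    refine Finset.sum_le_sum fun k hk => ?_
    have hik : i ≤ k := by
      simp only [Finset.mem_compl, Finset.mem_Iic, not_le] at hk
      exact hk.le
    exact mul_le_mul_of_nonneg_right (hmono hik) (hc0 k)
  have h3 : a i * ∑ k ∈ (Iic i)ᶜ, c k ≤ ∑ k ∈ Iic i, a i * (1 - c k) := by
    rw [← Finset.mul_sum]
    exact mul_le_mul_of_nonneg_left h2 (ha i)
  have h4 : ∑ k ∈ Iic i, a i * (1 - c k) ≤ ∑ k ∈ Iic i, a k * (1 - c k) := by
    refine Finset.sum_le_sum fun k hk => ?_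
    have hik : a i ≤ a k := hmono (Finset.mem_Iic.mp hk)
    have h1k : 0 ≤ 1 - c k := by linarith [hc1 k]
    exact mul_le_mul_of_nonneg_right hik h1k
  have hsplit : ∑ k, a k * c k = ∑ k ∈ Iic i, a k * c k + ∑ k ∈ (Iic i)ᶜ, a k * c k :=
    (Finset.sum_add_sum_compl _ _).symm
  have hfin : ∑ k ∈ Iic i, a k * c k + ∑ k ∈ Iic i, a k * (1 - c k) = ∑ k ∈ Iic i, a k := by
    rw [← Finset.sum_add_distrib]; apply Finset.sum_congr rfl; intros; ring
  linarith

private lemma unitary_col {N : ℕ} {V : Matrix (Fin N) (Fin N) ℂ}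
    (hV : V ∈ Matrix.unitaryGroup (Fin N) ℂ) (j : Fin N) :
    ∑ l, ‖V l j‖ ^ 2 = 1 := by
  have h1 : star V * V = 1 := (Matrix.mem_unitaryGroup_iff'.mp hV)
  have h2 : (star V * V) j j = 1 := by rw [h1]; simp [Matrix.one_apply]
  rw [Matrix.mul_apply] at h2
  have h3 : ((∑ l, ‖V l j‖ ^ 2 : ℝ) : ℂ) = 1 := by
    push_cast
    rw [← h2]
    refine Finset.sum_congr rfl fun l _ => ?_
    rw [Matrix.star_apply, ← Complex.ofReal_pow, Complex.sq_norm,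
      Complex.normSq_eq_conj_mul_self]
    rfl
  exact_mod_cast h3

private lemma unitary_row {N : ℕ} {V : Matrix (Fin N) (Fin N) ℂ}
    (hV : V ∈ Matrix.unitaryGroup (Fin N) ℂ) (j : Fin N) :
    ∑ l, ‖V j l‖ ^ 2 = 1 := by
  have h1 : V * star V = 1 := (Matrix.mem_unitaryGroup_iff.mp hV)
  have h2 : (V * star V) j j = 1 := by rw [h1]; simp [Matrix.one_apply]
  rw [Matrix.mul_apply] at h2
  have h3 : ((∑ l, ‖V j l‖ ^ 2 : ℝ) : ℂ) = 1 := by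
    push_cast
    rw [← h2]
    refine Finset.sum_congr rfl fun l _ => ?_
    rw [Matrix.star_apply, ← Complex.ofReal_pow, Complex.sq_norm, ← Complex.mul_conj]
    rfl
  exact_mod_cast h3

private lemma key_bound {m n : ℕ} (hmn : m ≤ n) (α : Fin n → ℝ)
    (hα0 : ∀ k, 0 ≤ α k) (hmono : Antitone α)
    (i : Fin n) (him : (i : ℕ) < m)
    (V : Matrix (Fin n) (Fin n) ℂ) (hV : V ∈ Matrix.unitaryGroup (Fin n) ℂ)
    (W : Matrix (Fin m) (Fin m) ℂ) (hW : W ∈ Matrix.unitaryGroup (Fin m) ℂ) :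
    ‖Matrix.trace (V * (Matrix.of fun (k : Fin m) (l : Fin n) =>
        if (k : ℕ) = (l : ℕ) then Complex.ofReal (α l) else 0)ᴴ * W *
        Matrix.of (fun (k : Fin m) (l : Fin n) =>
          if (k : ℕ) = (l : ℕ) ∧ (k : ℕ) ≤ (i : ℕ) then (1 : ℂ) else 0))‖
      ≤ ∑ k ∈ Finset.Iic i, α k := by
  classical
  set Sig : Matrix (Fin m) (Fin n) ℂ := Matrix.of fun (k : Fin m) (l : Fin n) =>
      if (k : ℕ) = (l : ℕ) then Complex.ofReal (α l) else 0 with hSigdef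
  set Si : Matrix (Fin m) (Fin n) ℂ := Matrix.of fun (k : Fin m) (l : Fin n) =>
      if (k : ℕ) = (l : ℕ) ∧ (k : ℕ) ≤ (i : ℕ) then (1 : ℂ) else 0 with hSidef
  set emb : Fin m → Fin n := Fin.castLE hmn with hembdef
  set i' : Fin m := ⟨(i : ℕ), him⟩ with hi'def
  have hembval : ∀ k : Fin m, ((emb k : Fin n) : ℕ) = (k : ℕ) := fun k => rfl
  -- Step 1: V * Sigᴴ
  have hVS : V * Sigᴴ = Matrix.of (fun (l : Fin n) (k : Fin m) =>
      Complex.ofReal (α (emb k)) * V l (emb k)) := by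
    ext l k
    rw [Matrix.mul_apply]
    simp only [Matrix.conjTranspose_apply, Matrix.of_apply, hSigdef]
    have hterm : ∀ j : Fin n, V l j * star (if (k : ℕ) = (j : ℕ) then Complex.ofReal (α j) else 0)
        = if emb k = j then Complex.ofReal (α j) * V l j else 0 := by
      intro j
      by_cases h : (k : ℕ) = (j : ℕ)
      · have he : emb k = j := Fin.ext (by rw [hembval]; exact h)
        simp [h, he, Complex.conj_ofReal, mul_comm]
      · have he : emb k ≠ j := fun hc => h (by rw [← hembval k, hc])
        simp [h, he]
    rw [Finset.sum_congr rfl (fun j _ => hterm j), Finset.sum_ite_eq]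
    simp
  -- Step 2: trace formula
  have hfilter : Finset.univ.filter (fun k : Fin m => (k : ℕ) ≤ (i : ℕ)) = Finset.Iic i' := by
    ext k; simp [Fin.le_def, hi'def]
  have htr : Matrix.trace (V * Sigᴴ * W * Si)
      = ∑ k : Fin m, Complex.ofReal (α (emb k)) *
          ∑ k' ∈ Finset.Iic i', V (emb k') (emb k) * W k k' := by
    rw [Matrix.trace_mul_comm]
    rw [Matrix.trace]
    have hdiag : ∀ k : Fin m, (Si * (V * Sigᴴ * W)).diag k
        = if (k : ℕ) ≤ (i : ℕ) then (V * Sigᴴ * W) (emb k) k else 0 := by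
      intro k
      rw [Matrix.diag_apply, Matrix.mul_apply]
      have hterm : ∀ l : Fin n,
          Si k l * (V * Sigᴴ * W) l k
          = if emb k = l then (if (k : ℕ) ≤ (i : ℕ) then (V * Sigᴴ * W) l k else 0) else 0 := by
        intro l
        simp only [hSidef, Matrix.of_apply]
        by_cases h : (k : ℕ) = (l : ℕ)
        · have he : emb k = l := Fin.ext (by rw [hembval]; exact h)
          by_cases h2 : (k : ℕ) ≤ (i : ℕ) <;> simp [h, he, h2]
        · have he : emb k ≠ l := fun hc => h (by rw [← hembval k, hc])
          simp [h, he]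
      rw [Finset.sum_congr rfl (fun l _ => hterm l), Finset.sum_ite_eq]
      simp
    rw [Finset.sum_congr rfl (fun k _ => hdiag k), ← Finset.sum_filter, hfilter]
    have hentry : ∀ k' : Fin m, (V * Sigᴴ * W) (emb k') k'
        = ∑ k : Fin m, Complex.ofReal (α (emb k)) * V (emb k') (emb k) * W k k' := by
      intro k'
      rw [hVS, Matrix.mul_apply]
      simp [Matrix.of_apply, mul_assoc]
    rw [Finset.sum_congr rfl (fun k' _ => hentry k'), Finset.sum_comm]
    refine Finset.sum_congr rfl fun k _ => ?_
    rw [Finset.mul_sum]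
    refine Finset.sum_congr rfl fun k' _ => ?_
    ring
  -- Step 3: the absolute-value bound
  set c : Fin m → ℝ := fun k => ∑ k' ∈ Finset.Iic i',
      ‖V (emb k') (emb k)‖ * ‖W k k'‖ with hcdef
  have habs : ‖Matrix.trace (V * Sigᴴ * W * Si)‖
      ≤ ∑ k : Fin m, α (emb k) * c k := by
    rw [htr]
    refine le_trans (norm_sum_le _ _) (Finset.sum_le_sum fun k _ => ?_)
    rw [norm_mul, Complex.norm_real, Real.norm_eq_abs, abs_of_nonneg (hα0 _)]
    refine mul_le_mul_of_nonneg_left ?_ (hα0 _)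
    calc ‖∑ k' ∈ Finset.Iic i', V (emb k') (emb k) * W k k'‖
        ≤ ∑ k' ∈ Finset.Iic i', ‖V (emb k') (emb k) * W k k'‖ :=
          norm_sum_le _ _
      _ = ∑ k' ∈ Finset.Iic i', ‖V (emb k') (emb k)‖ * ‖W k k'‖ :=
          Finset.sum_congr rfl fun k' _ => norm_mul _ _
      _ = c k := rfl
  -- partial column/row square sums
  set a : Fin m → ℝ := fun k => ∑ k' ∈ Finset.Iic i',
      ‖V (emb k') (emb k)‖ ^ 2 with hadef
  set b : Fin m → ℝ := fun k => ∑ k' ∈ Finset.Iic i',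
      ‖W k k'‖ ^ 2 with hbdef
  have hembinj : Function.Injective emb := Fin.castLE_injective hmn
  have hsum_emb_le : ∀ (s : Finset (Fin m)) (f : Fin n → ℝ), (∀ l, 0 ≤ f l) →
      (∑ k' ∈ s, f (emb k')) ≤ ∑ l : Fin n, f l := by
    intro s f hf
    rw [← Finset.sum_image (fun x _ y _ h => hembinj h)]
    exact Finset.sum_le_sum_of_subset_of_nonneg (Finset.subset_univ _) fun l _ _ => hf l
  have ha1 : ∀ k, a k ≤ 1 := by
    intro k
    have h := hsum_emb_le (Finset.Iic i') (fun l => ‖V l (emb k)‖ ^ 2)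
      (fun l => sq_nonneg _)
    rw [unitary_col hV (emb k)] at h
    exact h
  have hb1 : ∀ k, b k ≤ 1 := by
    intro k
    have h : b k ≤ ∑ k' : Fin m, ‖W k k'‖ ^ 2 :=
      Finset.sum_le_sum_of_subset_of_nonneg (Finset.subset_univ _) fun l _ _ => sq_nonneg _
    rw [unitary_row hW k] at h
    exact h
  have ha0 : ∀ k, 0 ≤ a k := fun k => Finset.sum_nonneg fun _ _ => sq_nonneg _
  have hb0 : ∀ k, 0 ≤ b k := fun k => Finset.sum_nonneg fun _ _ => sq_nonneg _
  have hc0 : ∀ k, 0 ≤ c k := fun k => Finset.sum_nonneg fun _ _ =>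
    mul_nonneg (norm_nonneg _) (norm_nonneg _)
  have hcs : ∀ k, c k ^ 2 ≤ a k * b k := fun k =>
    Finset.sum_mul_sq_le_sq_mul_sq _ _ _
  have hc1 : ∀ k, c k ≤ 1 := by
    intro k
    nlinarith [hcs k, ha1 k, hb1 k, ha0 k, hb0 k, hc0 k]
  have hsuma : ∑ k, a k ≤ ((Finset.Iic i').card : ℝ) := by
    have h1 : ∑ k, a k = ∑ k' ∈ Finset.Iic i',
        ∑ k : Fin m, ‖V (emb k') (emb k)‖ ^ 2 := by
      simp only [hadef]
      exact Finset.sum_comm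
    rw [h1]
    have h2 : ∀ k' ∈ Finset.Iic i',
        (∑ k : Fin m, ‖V (emb k') (emb k)‖ ^ 2) ≤ 1 := by
      intro k' _
      have h := hsum_emb_le Finset.univ (fun l => ‖V (emb k') l‖ ^ 2)
        (fun l => sq_nonneg _)
      rw [unitary_row hV (emb k')] at h
      exact h
    calc ∑ k' ∈ Finset.Iic i', ∑ k : Fin m, ‖V (emb k') (emb k)‖ ^ 2
        ≤ ∑ _k' ∈ Finset.Iic i', (1 : ℝ) := Finset.sum_le_sum h2
      _ = ((Finset.Iic i').card : ℝ) := by rw [Finset.sum_const, nsmul_eq_mul, mul_one]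
  have hsumb : ∑ k, b k ≤ ((Finset.Iic i').card : ℝ) := by
    have h1 : ∑ k, b k = ∑ k' ∈ Finset.Iic i', ∑ k : Fin m, ‖W k k'‖ ^ 2 := by
      simp only [hbdef]
      exact Finset.sum_comm
    rw [h1]
    refine le_of_eq ?_
    rw [Finset.sum_congr rfl fun k' _ => unitary_col hW k', Finset.sum_const, nsmul_eq_mul,
      mul_one]
  have hA0 : (0:ℝ) ≤ ∑ k, a k := Finset.sum_nonneg fun k _ => ha0 k
  have hB0 : (0:ℝ) ≤ ∑ k, b k := Finset.sum_nonneg fun k _ => hb0 k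
  have hcard0 : (0:ℝ) ≤ ((Finset.Iic i').card : ℝ) := Nat.cast_nonneg _
  have hsumc : ∑ k, c k ≤ ((Finset.Iic i').card : ℝ) := by
    have hcr : ∀ k, c k ≤ Real.sqrt (a k * b k) := by
      intro k
      exact (Real.le_sqrt (hc0 k) (mul_nonneg (ha0 k) (hb0 k))).mpr (hcs k)
    have hr0 : 0 ≤ ∑ k, Real.sqrt (a k * b k) :=
      Finset.sum_nonneg fun k _ => Real.sqrt_nonneg _
    have hrsq : (∑ k, Real.sqrt (a k * b k)) ^ 2 ≤ (∑ k, a k) * (∑ k, b k) :=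
      Finset.sum_sq_le_sum_mul_sum_of_sq_eq_mul _ (fun k _ => ha0 k) (fun k _ => hb0 k)
        fun k _ => Real.sq_sqrt (mul_nonneg (ha0 k) (hb0 k))
    have h5 : (∑ k, a k) * (∑ k, b k)
        ≤ ((Finset.Iic i').card : ℝ) * ((Finset.Iic i').card : ℝ) :=
      mul_le_mul hsuma hsumb hB0 hcard0
    have h6 : ∑ k, Real.sqrt (a k * b k) ≤ ((Finset.Iic i').card : ℝ) := by
      have h7 := Real.sqrt_le_sqrt (le_trans hrsq h5)
      rwa [Real.sqrt_sq hr0, Real.sqrt_mul_self hcard0] at h7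
    exact le_trans (Finset.sum_le_sum fun k _ => hcr k) h6
  -- Step 4: rearrangement
  have hre : ∑ k : Fin m, α (emb k) * c k ≤ ∑ k ∈ Finset.Iic i', α (emb k) := by
    refine rearr (fun k => α (emb k)) c i' ?_ (fun k => hα0 _) hc0 hc1 hsumc
    intro x y hxy
    refine hmono ?_
    rw [Fin.le_def]
    exact hxy
  -- Step 5: reindex RHS
  have hreindex : ∑ k ∈ Finset.Iic i', α (emb k) = ∑ k ∈ Finset.Iic i, α k := by
    refine Finset.sum_bij (fun k _ => emb k) ?_ ?_ ?_ ?_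
    · intro k hk
      simp only [Finset.mem_Iic] at hk ⊢
      rw [Fin.le_def, hembval]
      exact hk
    · intro k1 _ k2 _ h
      exact hembinj h
    · intro l hl
      simp only [Finset.mem_Iic] at hl
      have hlm : (l : ℕ) < m := lt_of_le_of_lt hl him
      refine ⟨⟨(l : ℕ), hlm⟩, ?_, ?_⟩
      · simp only [Finset.mem_Iic]
        exact hl
      · exact Fin.ext rfl
    · intro k _
      rfl
  calc ‖Matrix.trace (V * Sigᴴ * W * Si)‖ ≤ ∑ k : Fin m, α (emb k) * c k := habs
    _ ≤ ∑ k ∈ Finset.Iic i', α (emb k) := hre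
    _ = ∑ k ∈ Finset.Iic i, α k := hreindex


theorem stmt14
    {m p n : ℕ} (hmn : m ≤ n)
    (A : Matrix (Fin m) (Fin n) ℂ) (B : Matrix (Fin p) (Fin n) ℂ)
    (hrank : (Matrix.fromRows A B).rank = n)
    (U : Matrix (Fin m) (Fin m) ℂ) (hU : U ∈ Matrix.unitaryGroup (Fin m) ℂ)
    (R : Matrix (Fin n) (Fin n) ℂ) (hR : IsUnit R.det)
    (α : Fin n → ℝ)
    (hα0 : ∀ k, 0 ≤ α k) (hα1 : ∀ k, α k ≤ 1) (hmono : Antitone α)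
    (hzero : ∀ k : Fin n, m ≤ (k : ℕ) → α k = 0)
    (hA : A = U * (Matrix.of fun (k : Fin m) (l : Fin n) =>
        if (k : ℕ) = (l : ℕ) then Complex.ofReal (α l) else 0) * R)
    (hBB : Bᴴ * B = Rᴴ * Matrix.diagonal (fun l => Complex.ofReal (1 - α l ^ 2)) * R)
    (S : Matrix (Fin n) (Fin n) ℂ) (hS : S.PosDef)
    (hSsq : S * S = Aᴴ * A + Bᴴ * B)
    (i : Fin n) (him : (i : ℕ) < m) :
(⨆ W3 : Matrix.unitaryGroup (Fin n) ℂ, ⨆ W4 : Matrix.unitaryGroup (Fin m) ℂ,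
      ‖Matrix.trace ((W3 : Matrix (Fin n) (Fin n) ℂ) * S⁻¹ * Aᴴ *
        (W4 : Matrix (Fin m) (Fin m) ℂ) *
        Matrix.of (fun (k : Fin m) (l : Fin n) =>
          if (k : ℕ) = (l : ℕ) ∧ (k : ℕ) ≤ (i : ℕ) then (1 : ℂ) else 0))‖) =
      ∑ k ∈ Finset.Iic i, α k := by
  classical
  set Sig : Matrix (Fin m) (Fin n) ℂ := Matrix.of fun (k : Fin m) (l : Fin n) =>
      if (k : ℕ) = (l : ℕ) then Complex.ofReal (α l) else 0 with hSigdef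
  set Si : Matrix (Fin m) (Fin n) ℂ := Matrix.of fun (k : Fin m) (l : Fin n) =>
      if (k : ℕ) = (l : ℕ) ∧ (k : ℕ) ≤ (i : ℕ) then (1 : ℂ) else 0 with hSidef
  have hUU : Uᴴ * U = 1 := by
    rw [← Matrix.star_eq_conjTranspose]
    exact Matrix.mem_unitaryGroup_iff'.mp hU
  -- Sigᴴ * Sig is diagonal
  have hSig2 : Sigᴴ * Sig = Matrix.diagonal (fun l => Complex.ofReal (α l ^ 2)) := by
    ext l l'
    rw [Matrix.mul_apply]
    simp only [Matrix.conjTranspose_apply, Matrix.of_apply, hSigdef]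
    by_cases hll : l = l'
    · subst hll
      rw [Matrix.diagonal_apply_eq]
      by_cases hlm : (l : ℕ) < m
      · rw [Finset.sum_eq_single_of_mem (⟨(l : ℕ), hlm⟩ : Fin m) (Finset.mem_univ _)]
        · simp only [if_true]
          rw [Complex.star_def, Complex.conj_ofReal]
          push_cast
          ring
        · intro b _ hb
          have hbl : (b : ℕ) ≠ (l : ℕ) := fun h => hb (Fin.ext h)
          simp [hbl]
      · have hz : α l = 0 := hzero l (le_of_not_gt hlm)
        rw [Finset.sum_eq_zero, hz]
        · simp
        · intro k _
          have hkl : (k : ℕ) ≠ (l : ℕ) := by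
            have := k.isLt
            omega
          simp [hkl]
    · rw [Matrix.diagonal_apply_ne _ hll]
      refine Finset.sum_eq_zero fun k _ => ?_
      by_cases h1 : (k : ℕ) = (l : ℕ)
      · have h2 : (k : ℕ) ≠ (l' : ℕ) := by
          intro h
          exact hll (Fin.ext (h1.symm.trans h) : l = l')
        simp [h2]
      · simp [h1]
  have hAA : Aᴴ * A = Rᴴ * Matrix.diagonal (fun l => Complex.ofReal (α l ^ 2)) * R := by
    rw [hA, Matrix.conjTranspose_mul, Matrix.conjTranspose_mul]
    calc Rᴴ * (Sigᴴ * Uᴴ) * (U * Sig * R)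
        = Rᴴ * (Sigᴴ * ((Uᴴ * U) * (Sig * R))) := by simp only [Matrix.mul_assoc]
      _ = Rᴴ * ((Sigᴴ * Sig) * R) := by
          rw [hUU, Matrix.one_mul]
          simp only [Matrix.mul_assoc]
      _ = Rᴴ * Matrix.diagonal (fun l => Complex.ofReal (α l ^ 2)) * R := by
          rw [hSig2, Matrix.mul_assoc]
  have hM : S * S = Rᴴ * R := by
    rw [hSsq, hAA, hBB, Matrix.mul_assoc, Matrix.mul_assoc, ← Matrix.mul_add, ← Matrix.add_mul]
    have hD : Matrix.diagonal (fun l : Fin n => Complex.ofReal (α l ^ 2)) +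
        Matrix.diagonal (fun l : Fin n => Complex.ofReal (1 - α l ^ 2)) =
        (1 : Matrix (Fin n) (Fin n) ℂ) := by
      rw [Matrix.diagonal_add, ← Matrix.diagonal_one]
      congr 1
      funext l
      push_cast
      ring
    rw [hD, Matrix.one_mul]
  have hSdet : IsUnit S.det := by
    have h : S.det * S.det = Rᴴ.det * R.det := by
      rw [← Matrix.det_mul, ← Matrix.det_mul, hM]
    have hunit : IsUnit (S.det * S.det) := by
      rw [h, Matrix.det_conjTranspose]
      exact hR.star.mul hR
    exact isUnit_of_mul_isUnit_left hunit
  have hRH : IsUnit Rᴴ.det := by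
    rw [Matrix.det_conjTranspose]
    exact hR.star
  have hSinvH : S⁻¹ᴴ = S⁻¹ := by
    rw [Matrix.conjTranspose_nonsing_inv, hS.1.eq]
  have hcore : S⁻¹ * Rᴴ * (R * S⁻¹) = 1 := by
    calc S⁻¹ * Rᴴ * (R * S⁻¹) = S⁻¹ * (Rᴴ * R) * S⁻¹ := by simp only [Matrix.mul_assoc]
      _ = S⁻¹ * (S * S) * S⁻¹ := by rw [hM]
      _ = (S⁻¹ * S) * (S * S⁻¹) := by simp only [Matrix.mul_assoc]
      _ = 1 := by
          rw [Matrix.nonsing_inv_mul _ hSdet, Matrix.mul_nonsing_inv _ hSdet, Matrix.one_mul]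
  have hQ : S⁻¹ * Rᴴ ∈ Matrix.unitaryGroup (Fin n) ℂ := by
    rw [Matrix.mem_unitaryGroup_iff, Matrix.star_eq_conjTranspose, Matrix.conjTranspose_mul,
      Matrix.conjTranspose_conjTranspose, hSinvH]
    exact hcore
  have hW30 : R * S⁻¹ ∈ Matrix.unitaryGroup (Fin n) ℂ := by
    rw [Matrix.mem_unitaryGroup_iff', Matrix.star_eq_conjTranspose, Matrix.conjTranspose_mul,
      hSinvH]
    exact hcore
  have hUH : Uᴴ ∈ Matrix.unitaryGroup (Fin m) ℂ := by
    rw [← Matrix.star_eq_conjTranspose]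
    exact Unitary.star_mem hU
  have hAH : Aᴴ = Rᴴ * (Sigᴴ * Uᴴ) := by
    rw [hA, Matrix.conjTranspose_mul, Matrix.conjTranspose_mul]
  -- uniform upper bound
  have hbound : ∀ (W3 : Matrix.unitaryGroup (Fin n) ℂ) (W4 : Matrix.unitaryGroup (Fin m) ℂ),
      ‖Matrix.trace ((W3 : Matrix (Fin n) (Fin n) ℂ) * S⁻¹ * Aᴴ *
        (W4 : Matrix (Fin m) (Fin m) ℂ) * Si)‖ ≤ ∑ k ∈ Finset.Iic i, α k := by
    intro W3 W4
    have hEq : (W3 : Matrix (Fin n) (Fin n) ℂ) * S⁻¹ * Aᴴ * (W4 : Matrix (Fin m) (Fin m) ℂ) * Si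
        = ((W3 : Matrix (Fin n) (Fin n) ℂ) * (S⁻¹ * Rᴴ)) * Sigᴴ *
          (Uᴴ * (W4 : Matrix (Fin m) (Fin m) ℂ)) * Si := by
      rw [hAH]
      simp only [Matrix.mul_assoc]
    rw [hEq]
    exact key_bound hmn α hα0 hmono i him _ (mul_mem W3.2 hQ) _ (mul_mem hUH W4.2)
  -- witness value
  have hwitness : ‖Matrix.trace ((R * S⁻¹) * S⁻¹ * Aᴴ * U * Si)‖
      = ∑ k ∈ Finset.Iic i, α k := by
    have e1 : R * S⁻¹ * S⁻¹ * Aᴴ * U * Si = Sigᴴ * Si := by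
      rw [hAH]
      have e2 : R * S⁻¹ * S⁻¹ * (Rᴴ * (Sigᴴ * Uᴴ)) * U * Si
          = (R * (S⁻¹ * (S⁻¹ * Rᴴ))) * (Sigᴴ * (Uᴴ * U * Si)) := by
        simp only [Matrix.mul_assoc]
      rw [e2, hUU, Matrix.one_mul]
      have e3 : R * (S⁻¹ * (S⁻¹ * Rᴴ)) = 1 := by
        have e4 : S⁻¹ * (S⁻¹ * Rᴴ) = (S * S)⁻¹ * Rᴴ := by
          rw [Matrix.mul_inv_rev, Matrix.mul_assoc]
        rw [e4, hM, Matrix.mul_inv_rev]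
        calc R * (R⁻¹ * Rᴴ⁻¹ * Rᴴ) = (R * R⁻¹) * (Rᴴ⁻¹ * Rᴴ) := by simp only [Matrix.mul_assoc]
          _ = 1 := by
              rw [Matrix.mul_nonsing_inv _ hR, Matrix.nonsing_inv_mul _ hRH, Matrix.one_mul]
      rw [e3, Matrix.one_mul]
    rw [e1]
    have e5 : ∀ l : Fin n, (Sigᴴ * Si) l l
        = if (l : ℕ) ≤ (i : ℕ) then Complex.ofReal (α l) else 0 := by
      intro l
      rw [Matrix.mul_apply]
      simp only [Matrix.conjTranspose_apply, Matrix.of_apply, hSigdef, hSidef]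
      by_cases hl : (l : ℕ) ≤ (i : ℕ)
      · have hlm : (l : ℕ) < m := lt_of_le_of_lt hl him
        rw [Finset.sum_eq_single_of_mem (⟨(l : ℕ), hlm⟩ : Fin m) (Finset.mem_univ _), if_pos hl]
        · simp [hl, Complex.conj_ofReal]
        · intro b _ hb
          have hbl : (b : ℕ) ≠ (l : ℕ) := fun h => hb (Fin.ext h)
          simp [hbl]
      · rw [if_neg hl]
        refine Finset.sum_eq_zero fun k _ => ?_
        by_cases h1 : (k : ℕ) = (l : ℕ)
        · have h2 : ¬ ((k : ℕ) = (l : ℕ) ∧ (k : ℕ) ≤ (i : ℕ)) := fun hc => hl (h1 ▸ hc.2)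
          simp [h2]
        · simp [h1]
    have e6 : Matrix.trace (Sigᴴ * Si) = Complex.ofReal (∑ k ∈ Finset.Iic i, α k) := by
      rw [Matrix.trace]
      rw [Finset.sum_congr rfl (fun l _ => by rw [Matrix.diag_apply, e5 l])]
      rw [← Finset.sum_filter]
      have hfil : Finset.univ.filter (fun l : Fin n => (l : ℕ) ≤ (i : ℕ)) = Finset.Iic i := by
        ext l
        simp only [Finset.mem_filter, Finset.mem_univ, true_and, Finset.mem_Iic]
        exact Iff.rfl
      rw [hfil]
      push_cast
      rfl
    rw [e6, Complex.norm_real, Real.norm_eq_abs, abs_of_nonneg (Finset.sum_nonneg fun k _ => hα0 k)]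
  -- assemble
  haveI h1ne : Nonempty (Matrix.unitaryGroup (Fin n) ℂ) := ⟨1⟩
  haveI h2ne : Nonempty (Matrix.unitaryGroup (Fin m) ℂ) := ⟨1⟩
  apply le_antisymm
  · exact ciSup_le fun W3 => ciSup_le fun W4 => hbound W3 W4
  · refine le_ciSup_of_le ?_ (⟨R * S⁻¹, hW30⟩ : Matrix.unitaryGroup (Fin n) ℂ) ?_
    · refine ⟨∑ k ∈ Finset.Iic i, α k, ?_⟩
      rintro x ⟨W3, rfl⟩
      exact ciSup_le fun W4 => hbound W3 W4
    · refine le_ciSup_of_le ?_ (⟨U, hU⟩ : Matrix.unitaryGroup (Fin m) ℂ) ?_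
      · refine ⟨∑ k ∈ Finset.Iic i, α k, ?_⟩
        rintro x ⟨W4, rfl⟩
        exact hbound _ W4
      · exact hwitness.ge
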